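/- If u is a positive smooth function in the kernel of (δR_f)*, then Δ_{-ln u} e^{-f} = -e^{-f}(R_f - (n-1)σ), where Δ_{-ln u} w = Δw + ⟨∇ ln u, ∇w⟩ and σ is the function satisfying Δ_f u = -σ u. -/

import Mathlib

open Matrix MeasureTheory Real

noncomputable section

/-- Scalar fields on the manifold `M`. -/
abbrev SF (M : Type*) := M → ℝ
/-- Vector fields (≅ one-forms via the metric) expressed in an orthonormal moving frame. -/
abbrev VF (M : Type*) (n : ℕ) := M → Fin n → ℝ
/-- (0,2)-tensor fields expressed in a moving frame. -/
abbrev TF (M : Type*) (n : ℕ) := M → Matrix (Fin n) (Fin n) ℝ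

variable {M : Type*} {n : ℕ}

/-- Pointwise metric pairing of two vector fields: `⟨X, Y⟩`. -/
def dotV (X Y : VF M n) : SF M := fun p => X p ⬝ᵥ Y p
/-- Pointwise metric pairing of two symmetric 2-tensors: `⟨A, B⟩ = tr (A B)`. -/
def pairT (A B : TF M n) : SF M := fun p => (A p * B p).trace
/-- The one-form `A(X, ·)` (identified with a vector field). -/
def appT (A : TF M n) (X : VF M n) : VF M n := fun p => (A p).mulVec (X p)
/-- The trace of a 2-tensor. -/
def trT (A : TF M n) : SF M := fun p => (A p).trace
/-- The Riemannian metric `g` (the identity in an orthonormal frame). -/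
def gMet (M : Type*) (n : ℕ) : TF M n := fun _ => (1 : Matrix (Fin n) (Fin n) ℝ)
/-- Multiplication of a 2-tensor by a scalar function. -/
def smulT (u : SF M) (A : TF M n) : TF M n := fun p => u p • A p
/-- Multiplication of a vector field by a scalar function. -/
def smulV (u : SF M) (X : VF M n) : VF M n := fun p => u p • X p
/-- The pointwise norm `|X|` of a vector field. -/
def normV (X : VF M n) : SF M := fun p => Real.sqrt (X p ⬝ᵥ X p)

/-- The drift Laplacian `Δ_f u = Δu - ⟨∇f, ∇u⟩`. -/
def driftLap (Δ : SF M → SF M) (grad : SF M → VF M n) (f u : SF M) : SF M :=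
  Δ u - dotV (grad f) (grad u)
/-- The Bakry–Émery Ricci tensor `Ric_f = Ric + ∇²f`. -/
def RicF (Ric : TF M n) (Hess : SF M → TF M n) (f : SF M) : TF M n := Ric + Hess f
/-- The Perelman scalar curvature `𝓡_f = R + 2Δf - |∇f|²`. -/
def perelmanR (R : SF M) (Δ : SF M → SF M) (grad : SF M → VF M n) (f : SF M) : SF M :=
  R + 2 • Δ f - dotV (grad f) (grad f)
/-- The weighted divergence of a vector field: `div_f X = div X - ⟨X, ∇f⟩`. -/
def divfV (divV : VF M n → SF M) (grad : SF M → VF M n) (f : SF M) (X : VF M n) : SF M :=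
  divV X - dotV X (grad f)
/-- The weighted divergence of a 2-tensor: `div_f A = div A - A(∇f, ·)`. -/
def divfT (divT : TF M n → VF M n) (grad : SF M → VF M n) (f : SF M) (A : TF M n) : VF M n :=
  divT A - appT A (grad f)
/-- The traceless part `A° = A - (tr A / n) g` of a 2-tensor. -/
def tracelessT (A : TF M n) : TF M n := A - smulT (fun p => trT A p / n) (gMet M n)
/-- `u` lies in the kernel of `(δ𝓡_f)^*`, i.e. `-(Δ_f u) g + ∇²u - u Ric_f = 0`. -/
def PStatic (Δ : SF M → SF M) (grad : SF M → VF M n) (Hess : SF M → TF M n)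
    (Ric : TF M n) (f u : SF M) : Prop :=
  smulT (-(driftLap Δ grad f u)) (gMet M n) + Hess u - smulT u (RicF Ric Hess f) = 0

/-- if `u > 0` is in the kernel of `(δ𝓡_f)^*`, then
`Δ_{-ln u} e^{-f} = -e^{-f}(𝓡_f - (n-1)σ)` where `Δ_f u = -σ u`. -/
theorem statement6 {M : Type*} {n : ℕ}
    (Δ : SF M → SF M) (grad : SF M → VF M n)
    (Hess : SF M → TF M n) (Ric : TF M n) (R f u σ : SF M)
    (hu : ∀ p, 0 < u p)
    (hker : PStatic Δ grad Hess Ric f u)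
    (hσ : driftLap Δ grad f u = fun p => -(σ p) * u p)
    -- trace identities:
    (htrHess : ∀ w : SF M, trT (Hess w) = Δ w)
    (htrRic : trT Ric = R)
    -- chain rules:
    (hgradlog : grad (fun p => Real.log (u p)) = fun p => (u p)⁻¹ • grad u p)
    (hgradexp : grad (fun p => Real.exp (-(f p)))
        = fun p => (-Real.exp (-(f p))) • grad f p)
    (hlapexp : Δ (fun p => Real.exp (-(f p)))
        = fun p => Real.exp (-(f p)) * (dotV (grad f) (grad f) p - Δ f p)) :
    (fun p => Δ (fun q => Real.exp (-(f q))) p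
        + dotV (grad (fun q => Real.log (u q))) (grad (fun q => Real.exp (-(f q)))) p)
      = fun p => -(Real.exp (-(f p))) * (perelmanR R Δ grad f p - ((n : ℝ) - 1) * σ p) := by
  funext p
  have hne : u p ≠ 0 := (hu p).ne'
  have hk := congrFun hker p
  simp only [PStatic, smulT, gMet, RicF, Pi.add_apply, Pi.sub_apply, Pi.zero_apply,
    Pi.neg_apply] at hk
  have htr := congrArg Matrix.trace hk
  have h1 : (Hess u p).trace = Δ u p := congrFun (htrHess u) p
  have h2 : (Hess f p).trace = Δ f p := congrFun (htrHess f) p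
  have h3 : (Ric p).trace = R p := congrFun htrRic p
  simp only [Matrix.trace_add, Matrix.trace_sub, Matrix.trace_smul, Matrix.trace_one,
    Matrix.trace_zero, Fintype.card_fin, h1, h2, h3, smul_eq_mul] at htr
  have hσp : driftLap Δ grad f u p = -(σ p) * u p := congrFun hσ p
  have hdl : driftLap Δ grad f u p = Δ u p - dotV (grad f) (grad u) p := rfl
  have hb : dotV (grad f) (grad u) p = u p * (R p + Δ f p - ((n:ℝ)-1) * σ p) := by
    have := htr
    rw [hσp] at this
    have hΔu : Δ u p = dotV (grad f) (grad u) p - σ p * u p := by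
      have := hdl.symm.trans hσp; linarith
    rw [hΔu] at this
    ring_nf at this ⊢
    linarith
  simp only [hlapexp, hgradexp, hgradlog, dotV, smul_dotProduct,
    dotProduct_smul, smul_eq_mul, perelmanR, Pi.add_apply, Pi.sub_apply, nsmul_eq_mul,
    Nat.cast_ofNat, Pi.mul_apply, Pi.ofNat_apply]
  have hcomm : grad u p ⬝ᵥ grad f p = grad f p ⬝ᵥ grad u p := dotProduct_comm _ _
  rw [hcomm]
  have hb' : grad f p ⬝ᵥ grad u p = dotV (grad f) (grad u) p := rfl
  rw [hb', hb]
  field_simp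
  ring
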